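/- arXiv:2212.05151 — 2 statements merged into one kernel-verified Lean document; each statement's English description precedes it below -/
import Mathlib

section
/- For the Bernoulli model, for every n = 1, …, N and every x ∈ {0,1}^n, one has U_n^N(s_n(x)) = C(n, s_n(x)) · V_n^N(x). (Induction invariant established in the proof of Proposition 1.) -/
open scoped BigOperators

/-- number of successes in the sample `x` -/
def count {n : ℕ} (x : Fin n → Bool) : ℕ := (Finset.univ.filter fun i => x i).card

/-- joint Bernoulli density `f_θ^n(x) = θ^{s_n(x)} (1-θ)^{n-s_n(x)}` -/
noncomputable def fpow (θ : ℝ) (n : ℕ) (x : Fin n → Bool) : ℝ :=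
  θ ^ count x * (1 - θ) ^ (n - count x)

/-- binomial pmf `g_θ^n(s) = C(n,s) θ^s (1-θ)^{n-s}` -/
noncomputable def binom (θ : ℝ) (n s : ℕ) : ℝ :=
  (n.choose s : ℝ) * θ ^ s * (1 - θ) ^ (n - s)

/-- `v_n(x) = min_{1≤j≤k} Σ_{i≠j} λ_{ij} f_{θ_i}^n(x)` -/
noncomputable def vfun (k : ℕ) (θs : Fin k → ℝ) (lam : Fin k → Fin k → ℝ)
    (n : ℕ) (x : Fin n → Bool) : ℝ :=
  ⨅ j : Fin k, ∑ i ∈ Finset.univ.filter (· ≠ j), lam i j * fpow (θs i) n x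

/-- `u_n(s) = min_{1≤j≤k} Σ_{i≠j} λ_{ij} g_{θ_i}^n(s)` -/
noncomputable def ufun (k : ℕ) (θs : Fin k → ℝ) (lam : Fin k → Fin k → ℝ)
    (n s : ℕ) : ℝ :=
  ⨅ j : Fin k, ∑ i ∈ Finset.univ.filter (· ≠ j), lam i j * binom (θs i) n s

/-- `f_{γϑ}^n(x) = Σ_i γ_i f_{ϑ_i}^n(x)` -/
noncomputable def fmix (K : ℕ) (γ ϑ : Fin K → ℝ) (n : ℕ) (x : Fin n → Bool) : ℝ :=
  ∑ i, γ i * fpow (ϑ i) n x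

/-- `g_{γϑ}^n(s) = Σ_i γ_i g_{ϑ_i}^n(s)` -/
noncomputable def gmix (K : ℕ) (γ ϑ : Fin K → ℝ) (n s : ℕ) : ℝ :=
  ∑ i, γ i * binom (ϑ i) n s

/-- the backward recursion `V_n^N`: `V_N^N = v_N` and
`V_{n}^N = min{v_{n}, f_{γϑ}^{n} + 𝓘_{n+1} V_{n+1}^N}` for `n < N`, where
`(𝓘_{n+1} V)(x) = V(x,0) + V(x,1)` (the operator `𝓘` is integration with respect to
counting measure on `{0,1}`). -/
noncomputable def V (k : ℕ) (θs : Fin k → ℝ) (lam : Fin k → Fin k → ℝ)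
    (K : ℕ) (γ ϑ : Fin K → ℝ) (N : ℕ) : (n : ℕ) → (Fin n → Bool) → ℝ :=
  fun n x =>
    if _h : n < N then
      min (vfun k θs lam n x)
        (fmix K γ ϑ n x +
          (V k θs lam K γ ϑ N (n + 1) (Fin.snoc x false) +
            V k θs lam K γ ϑ N (n + 1) (Fin.snoc x true)))
    else vfun k θs lam n x
  termination_by n => N - n

/-- the backward recursion `U_n^N`: `U_N^N = u_N` and
`U_{n}^N(s) = min{u_{n}(s), g_{γϑ}^{n}(s) + (𝒥_{n+1} U_{n+1}^N)(s)}` for `n < N`, where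
`(𝒥_{n+1} U)(s) = U(s)·(n+1-s)/(n+1) + U(s+1)·(s+1)/(n+1)`. -/
noncomputable def U (k : ℕ) (θs : Fin k → ℝ) (lam : Fin k → Fin k → ℝ)
    (K : ℕ) (γ ϑ : Fin K → ℝ) (N : ℕ) : ℕ → ℕ → ℝ :=
  fun n s =>
    if _h : n < N then
      min (ufun k θs lam n s)
        (gmix K γ ϑ n s +
          (U k θs lam K γ ϑ N (n + 1) s * ((n + 1 - s : ℕ) : ℝ) / (n + 1) +
            U k θs lam K γ ϑ N (n + 1) (s + 1) * ((s + 1 : ℕ) : ℝ) / (n + 1)))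
    else ufun k θs lam n s
  termination_by n _s => N - n


lemma count_le {n : ℕ} (x : Fin n → Bool) : count x ≤ n := by
  simpa [count] using Finset.card_filter_le Finset.univ (fun i => x i)

lemma count_snoc {n : ℕ} (x : Fin n → Bool) (b : Bool) :
    count (Fin.snoc x b : Fin (n+1) → Bool) = count x + b.toNat := by
  simp only [count, Finset.card_filter, Fin.sum_univ_castSucc, Fin.snoc_castSucc,
    Fin.snoc_last]
  cases b <;> simp

lemma binom_eq_fpow {θ : ℝ} {n s : ℕ} (x : Fin n → Bool) (h : count x = s) :
    binom θ n s = (n.choose s : ℝ) * fpow θ n x := by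
  subst h; rw [binom, fpow, mul_assoc]

lemma ufun_eq (k : ℕ) (θs : Fin k → ℝ) (lam : Fin k → Fin k → ℝ)
    {n s : ℕ} (x : Fin n → Bool) (h : count x = s) :
    ufun k θs lam n s = (n.choose s : ℝ) * vfun k θs lam n x := by
  rw [ufun, vfun, Real.mul_iInf_of_nonneg (by positivity)]
  refine iInf_congr fun j => ?_
  rw [Finset.mul_sum]
  refine Finset.sum_congr rfl fun i _ => ?_
  rw [binom_eq_fpow x h]; ring

lemma gmix_eq (K : ℕ) (γ ϑ : Fin K → ℝ) {n s : ℕ} (x : Fin n → Bool) (h : count x = s) :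
    gmix K γ ϑ n s = (n.choose s : ℝ) * fmix K γ ϑ n x := by
  rw [gmix, fmix, Finset.mul_sum]
  refine Finset.sum_congr rfl fun i _ => ?_
  rw [binom_eq_fpow x h]; ring

/-- **Induction invariant in the proof of Proposition 1**: for every `n = 1, …, N` and
every `x ∈ {0,1}^n`, `U_n^N(s_n(x)) = C(n, s_n(x)) · V_n^N(x)`. -/
theorem stmt1 (k : ℕ) (hk : 2 ≤ k) (θs : Fin k → ℝ)
    (hθ : ∀ i, θs i ∈ Set.Icc (0 : ℝ) 1)
    (lam : Fin k → Fin k → ℝ) (hlam : ∀ i j, 0 ≤ lam i j)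
    (K : ℕ) (hK : 1 ≤ K) (γ ϑ : Fin K → ℝ)
    (hγ : ∀ i, 0 ≤ γ i) (hγ1 : ∑ i, γ i = 1)
    (hϑ : ∀ i, ϑ i ∈ Set.Icc (0 : ℝ) 1)
    (N : ℕ) (hN : 2 ≤ N)
    (n : ℕ) (hn : 1 ≤ n) (hnN : n ≤ N) (x : Fin n → Bool) :
    U k θs lam K γ ϑ N n (count x) =
      (n.choose (count x) : ℝ) * V k θs lam K γ ϑ N n x := by
  have key : ∀ d n, N - n = d → n ≤ N → ∀ x : Fin n → Bool,
      U k θs lam K γ ϑ N n (count x) = (n.choose (count x) : ℝ) * V k θs lam K γ ϑ N n x := by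
    intro d
    induction d with
    | zero =>
      intro n hd hle x
      rw [U, V, dif_neg (by omega), dif_neg (by omega)]
      exact ufun_eq k θs lam x rfl
    | succ d ih =>
      intro n hd hle x
      have hlt : n < N := by omega
      rw [U, V, dif_pos hlt, dif_pos hlt]
      have h0 := ih (n+1) (by omega) (by omega) (Fin.snoc x false)
      have h1 := ih (n+1) (by omega) (by omega) (Fin.snoc x true)
      rw [count_snoc] at h0 h1
      simp only [Bool.toNat_false, Bool.toNat_true, Nat.add_zero] at h0 h1
      set s := count x with hs
      have hsle : s ≤ n := count_le x
      rw [h0, h1, ufun_eq k θs lam x hs.symm, gmix_eq K γ ϑ x hs.symm]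
      have hne : ((n : ℝ) + 1) ≠ 0 := by positivity
      have h := Nat.choose_succ_right_eq (n+1) s
      have h2 := Nat.add_one_mul_choose_eq n s
      have hnat2 : (n+1).choose (s+1) * (s+1) = (n+1) * n.choose s := h2.symm
      have hnat : (n+1).choose s * (n+1-s) = (n+1) * n.choose s := by omega
      have e1 : (((n+1).choose s : ℕ) : ℝ) * ((n+1-s : ℕ) : ℝ) = ((n:ℝ)+1) * (n.choose s : ℝ) := by
        rw [← Nat.cast_mul, hnat]; push_cast; ring
      have e2 : (((n+1).choose (s+1) : ℕ) : ℝ) * ((s+1 : ℕ) : ℝ) = ((n:ℝ)+1) * (n.choose s : ℝ) := by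
        rw [← Nat.cast_mul, hnat2]; push_cast; ring
      have t0 : ((n+1).choose s : ℝ) * V k θs lam K γ ϑ N (n+1) (Fin.snoc x false)
            * ((n+1-s : ℕ) : ℝ) / ((n:ℝ)+1)
          = (n.choose s : ℝ) * V k θs lam K γ ϑ N (n+1) (Fin.snoc x false) := by
        rw [div_eq_iff hne]
        linear_combination V k θs lam K γ ϑ N (n+1) (Fin.snoc x false) * e1
      have t1 : ((n+1).choose (s+1) : ℝ) * V k θs lam K γ ϑ N (n+1) (Fin.snoc x true)
            * ((s+1 : ℕ) : ℝ) / ((n:ℝ)+1)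
          = (n.choose s : ℝ) * V k θs lam K γ ϑ N (n+1) (Fin.snoc x true) := by
        rw [div_eq_iff hne]
        linear_combination V k θs lam K γ ϑ N (n+1) (Fin.snoc x true) * e2
      rw [t0, t1, ← mul_add, ← mul_add,
        mul_min_of_nonneg _ _ (by positivity : (0:ℝ) ≤ (n.choose s : ℝ))]
  exact key (N - n) n rfl hnN x
end

section
/- Let θ ∈ [0,1], N ≥ 1, and let ψ be a stopping rule based on the sufficient statistic with ψ ∈ 𝒮^N. With b_n^m(s;θ) as defined by the backward recursion, the expected sample size satisfies E_θ τ_ψ = Σ_{n=1}^N n Σ_{x∈{0,1}^n} s_n^ψ(x) θ^{s_n(x)}(1−θ)^{n−s_n(x)} = 1 + Σ_{m=1}^{N−1} (b_1^m(0;θ) + b_1^m(1;θ)). (Equation (4-2).) -/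
open scoped BigOperators

/-- `s_m(x)`: number of successes among the first `m` coordinates of `x ∈ {0,1}^n` -/
def prefixCount {n : ℕ} (x : Fin n → Bool) (m : ℕ) : ℕ :=
  (Finset.univ.filter fun i : Fin n => i.val < m ∧ x i).card

/-- `s_n^ψ(x) = (∏_{m=1}^{n-1} (1-ψ_m(s_m(x)))) · ψ_n(s_n(x))`, for a stopping rule `ψ`
based on the sufficient statistic -/
noncomputable def sstop (ψ : ℕ → ℕ → ℝ) (n : ℕ) (x : Fin n → Bool) : ℝ :=
  (∏ m ∈ Finset.range (n - 1), (1 - ψ (m + 1) (prefixCount x (m + 1)))) *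
    ψ n (prefixCount x n)

/-- `ψ ∈ 𝒮^N`: the stopping rule is truncated at `N`, i.e.
`∏_{n=1}^N (1-ψ_n(s_n(x))) = 0` for every `x ∈ {0,1}^N`. -/
def TruncatedAt (ψ : ℕ → ℕ → ℝ) (N : ℕ) : Prop :=
  ∀ x : Fin N → Bool, ∏ n ∈ Finset.range N, (1 - ψ (n + 1) (prefixCount x (n + 1))) = 0

/-- the backward recursion for non-stopping probabilities:
`b_m^m(s;θ) = g_θ^m(s)(1−ψ_m(s))` and, for `n < m`,
`b_n^m(s;θ) = [b_{n+1}^m(s;θ)·(n+1−s)/(n+1) + b_{n+1}^m(s+1;θ)·(s+1)/(n+1)]·(1−ψ_n(s))`. -/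
noncomputable def brec (θ : ℝ) (ψ : ℕ → ℕ → ℝ) (m : ℕ) : ℕ → ℕ → ℝ :=
  fun n s =>
    if _h : n < m then
      (brec θ ψ m (n + 1) s * ((n + 1 - s : ℕ) : ℝ) / (n + 1) +
          brec θ ψ m (n + 1) (s + 1) * ((s + 1 : ℕ) : ℝ) / (n + 1)) *
        (1 - ψ n s)
    else binom θ n s * (1 - ψ n s)
  termination_by n _s => m - n

lemma pc_eq_sum {n} (x : Fin n → Bool) (m : ℕ) :
    prefixCount x m = ∑ i : Fin n, if i.val < m ∧ x i then 1 else 0 :=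
  Finset.card_filter _ _

lemma pc_le {n} (x : Fin n → Bool) : prefixCount x n ≤ n := by
  have := Finset.card_le_card (Finset.filter_subset
    (fun i : Fin n => i.val < n ∧ x i) Finset.univ)
  simpa [prefixCount] using this

lemma pc_zero {n} (x : Fin n → Bool) : prefixCount x 0 = 0 := by
  simp [prefixCount]

lemma pc_cons {d : ℕ} (b : Bool) (y : Fin d → Bool) (k : ℕ) :
    prefixCount (Fin.cons b y : Fin (d+1) → Bool) (k+1)
      = (if b then 1 else 0) + prefixCount y k := by
  simp only [pc_eq_sum, Fin.sum_univ_succ, Fin.cons_zero, Fin.cons_succ]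
  congr 1
  · simp
  · apply Finset.sum_congr rfl
    intro i _
    congr 1
    simp [Fin.val_succ, Nat.succ_lt_succ_iff]

lemma binom_down (θ : ℝ) (n s : ℕ) :
    binom θ (n+1) s * ((n + 1 - s : ℕ) : ℝ) / (n + 1) = binom θ n s * (1 - θ) := by
  have hn1 : ((n:ℝ)+1) ≠ 0 := by positivity
  by_cases hs : s ≤ n
  · have key' : ((n+1).choose s : ℝ) * ((n:ℝ)+1-s) = (n.choose s : ℝ) * ((n:ℝ)+1) := by
      have := congrArg (Nat.cast : ℕ → ℝ) (Nat.choose_mul_succ_eq n s).symm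
      push_cast [Nat.cast_sub (show s ≤ n+1 by omega)] at this
      linarith
    have h1 : (n+1) - s = (n - s) + 1 := by omega
    rw [binom, binom, h1, pow_succ, div_eq_iff hn1]
    push_cast [Nat.cast_sub hs]
    linear_combination (θ^s * (1-θ)^(n-s) * (1-θ)) * key'
  · have h1 : n.choose s = 0 := Nat.choose_eq_zero_of_lt (by omega)
    by_cases hs2 : s = n + 1
    · subst hs2; simp [binom, h1]
    · have h2 : (n+1).choose s = 0 := Nat.choose_eq_zero_of_lt (by omega)
      simp [binom, h1, h2]

lemma binom_up (θ : ℝ) (n s : ℕ) :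
    binom θ (n+1) (s+1) * ((s + 1 : ℕ) : ℝ) / (n + 1) = binom θ n s * θ := by
  have hn1 : ((n:ℝ)+1) ≠ 0 := by positivity
  have key' : ((n+1).choose (s+1) : ℝ) * ((s:ℝ)+1) = ((n:ℝ)+1) * (n.choose s : ℝ) := by
    have := congrArg (Nat.cast : ℕ → ℝ) (Nat.add_one_mul_choose_eq n s).symm
    push_cast at this
    linarith
  have h1 : (n+1) - (s+1) = n - s := by omega
  rw [binom, binom, h1, pow_succ, div_eq_iff hn1]
  push_cast
  linear_combination (θ^s * (1-θ)^(n-s) * θ) * key'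

noncomputable def Bfun (θ : ℝ) (ψ : ℕ → ℕ → ℝ) (d n s : ℕ) : ℝ :=
  ∑ y : Fin d → Bool,
    binom θ n s * (θ ^ prefixCount y d * (1 - θ) ^ (d - prefixCount y d)) *
      ∏ k ∈ Finset.range (d + 1), (1 - ψ (n + k) (s + prefixCount y k))

lemma term_id (θ : ℝ) (w : ℝ) (n s d c : ℕ) (hc : c ≤ d) (P0 P1 : ℝ) :
    binom θ n s * (θ ^ (1 + c) * (1-θ) ^ ((d+1) - (1 + c))) * (P1 * w)
      + binom θ n s * (θ ^ c * (1-θ) ^ ((d+1) - c)) * (P0 * w)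
    = (binom θ (n+1) s * (θ ^ c * (1-θ) ^ (d - c)) * P0 * ((n + 1 - s : ℕ) : ℝ) / (↑n + 1)
        + binom θ (n+1) (s+1) * (θ ^ c * (1-θ) ^ (d - c)) * P1 * ((s + 1 : ℕ) : ℝ) / (↑n + 1)) * w := by
  have e1 : (d+1) - c = (d - c) + 1 := by omega
  have e2 : (d+1) - (1 + c) = d - c := by omega
  rw [e1, e2, pow_succ]
  linear_combination (-(θ^c * (1-θ)^(d-c) * P0 * w)) * binom_down θ n s
    - (θ^c * (1-θ)^(d-c) * P1 * w) * binom_up θ n s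

lemma Bfun_succ (θ : ℝ) (ψ : ℕ → ℕ → ℝ) (n s d : ℕ) :
    Bfun θ ψ (d+1) n s =
      (Bfun θ ψ d (n+1) s * ((n + 1 - s : ℕ) : ℝ) / (↑n + 1) +
        Bfun θ ψ d (n+1) (s+1) * ((s + 1 : ℕ) : ℝ) / (↑n + 1)) * (1 - ψ n s) := by
  rw [Bfun, Bfun, Bfun]
  rw [Finset.sum_mul, Finset.sum_div, Finset.sum_mul, Finset.sum_div,
    ← Finset.sum_add_distrib, Finset.sum_mul]
  rw [(Fintype.sum_equiv (Fin.consEquiv fun _ : Fin (d+1) => Bool)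
    (fun p : Bool × (Fin d → Bool) =>
      binom θ n s * (θ ^ prefixCount (Fin.cons p.1 p.2 : Fin (d+1) → Bool) (d+1) *
        (1 - θ) ^ ((d+1) - prefixCount (Fin.cons p.1 p.2 : Fin (d+1) → Bool) (d+1))) *
      ∏ k ∈ Finset.range (d + 1 + 1),
        (1 - ψ (n + k) (s + prefixCount (Fin.cons p.1 p.2 : Fin (d+1) → Bool) k))) _
    (fun _ => rfl)).symm]
  rw [Fintype.sum_prod_type_right]
  apply Finset.sum_congr rfl
  intro y _
  rw [Fintype.sum_bool]
  simp only [Finset.prod_range_succ', pc_cons, pc_zero, if_true, if_false,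
    Bool.false_eq_true, add_zero, zero_add, Nat.add_zero]
  have hprod0 : (∏ k ∈ Finset.range d, (1 - ψ (n + (k+1+1)) (s + prefixCount y (k+1))))
      = ∏ k ∈ Finset.range d, (1 - ψ (n+1+(k+1)) (s + prefixCount y (k+1))) :=
    Finset.prod_congr rfl fun k _ => by rw [show n + (k+1+1) = n+1+(k+1) by omega]
  have hprod1 : (∏ k ∈ Finset.range d, (1 - ψ (n + (k+1+1)) (s + (1 + prefixCount y (k+1)))))
      = ∏ k ∈ Finset.range d, (1 - ψ (n+1+(k+1)) (s + 1 + prefixCount y (k+1))) :=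
    Finset.prod_congr rfl fun k _ => by
      rw [show n + (k+1+1) = n+1+(k+1) by omega, show s + (1 + prefixCount y (k+1)) = s + 1 + prefixCount y (k+1) by omega]
  rw [hprod0, hprod1]
  exact term_id θ (1 - ψ n s) n s d (prefixCount y d) (pc_le y) _ _

lemma pc_snoc_lt {m : ℕ} (x : Fin m → Bool) (b : Bool) (k : ℕ) (hk : k ≤ m) :
    prefixCount (Fin.snoc x b : Fin (m+1) → Bool) k = prefixCount x k := by
  simp only [pc_eq_sum, Fin.sum_univ_castSucc, Fin.snoc_castSucc, Fin.snoc_last]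
  have h : ¬ ((Fin.last m).val < k ∧ b = true) := by
    simp [Fin.last]; intro h; omega
  rw [if_neg h, add_zero]
  apply Finset.sum_congr rfl
  intro i _
  simp [Fin.coe_castSucc]

lemma pc_snoc_top {m : ℕ} (x : Fin m → Bool) (b : Bool) :
    prefixCount (Fin.snoc x b : Fin (m+1) → Bool) (m+1)
      = prefixCount x m + (if b then 1 else 0) := by
  simp only [pc_eq_sum, Fin.sum_univ_castSucc, Fin.snoc_castSucc, Fin.snoc_last]
  congr 1
  · apply Finset.sum_congr rfl
    intro i _
    have h : (i.castSucc : ℕ) = i.val := rfl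
    have hi : i.val < m := i.isLt
    simp [h, hi, Nat.lt_succ_of_lt hi]
  · simp [Fin.last]

lemma Bfun_zero (θ : ℝ) (ψ : ℕ → ℕ → ℝ) (n s : ℕ) :
    Bfun θ ψ 0 n s = binom θ n s * (1 - ψ n s) := by
  simp [Bfun, pc_zero]

lemma brec_eq (θ : ℝ) (ψ : ℕ → ℕ → ℝ) (d : ℕ) :
    ∀ n s, brec θ ψ (n + d) n s = Bfun θ ψ d n s := by
  induction d with
  | zero =>
    intro n s
    rw [brec]
    simp [Bfun_zero]
  | succ d ih =>
    intro n s
    rw [brec, dif_pos (by omega : n < n + (d+1)),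
      show n + (d+1) = (n+1) + d from by omega, ih (n+1) s, ih (n+1) (s+1)]
    exact (Bfun_succ θ ψ n s d).symm

noncomputable def Qfun (θ : ℝ) (ψ : ℕ → ℕ → ℝ) (m : ℕ) : ℝ :=
  ∑ x : Fin m → Bool,
    (∏ k ∈ Finset.range m, (1 - ψ (k + 1) (prefixCount x (k + 1)))) *
      (θ ^ prefixCount x m * (1 - θ) ^ (m - prefixCount x m))

lemma Qfun_zero (θ : ℝ) (ψ : ℕ → ℕ → ℝ) : Qfun θ ψ 0 = 1 := by
  simp [Qfun, pc_zero]

lemma Q_eq_B (θ : ℝ) (ψ : ℕ → ℕ → ℝ) (d : ℕ) :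
    Qfun θ ψ (d+1) = Bfun θ ψ d 1 0 + Bfun θ ψ d 1 1 := by
  rw [Qfun, Bfun, Bfun]
  rw [(Fintype.sum_equiv (Fin.consEquiv fun _ : Fin (d+1) => Bool)
    (fun p : Bool × (Fin d → Bool) =>
      (∏ k ∈ Finset.range (d+1),
        (1 - ψ (k + 1) (prefixCount (Fin.cons p.1 p.2 : Fin (d+1) → Bool) (k + 1)))) *
      (θ ^ prefixCount (Fin.cons p.1 p.2 : Fin (d+1) → Bool) (d+1) *
        (1 - θ) ^ ((d+1) - prefixCount (Fin.cons p.1 p.2 : Fin (d+1) → Bool) (d+1)))) _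
    (fun _ => rfl)).symm]
  rw [Fintype.sum_prod_type, Fintype.sum_bool]
  rw [add_comm]
  congr 1
  · -- false part = Bfun d 1 0
    apply Finset.sum_congr rfl
    intro y _
    simp only [pc_cons, Bool.false_eq_true, if_false, zero_add]
    have hP : (∏ k ∈ Finset.range (d+1), (1 - ψ (k+1) (prefixCount y k)))
        = ∏ k ∈ Finset.range (d+1), (1 - ψ (1+k) (0 + prefixCount y k)) :=
      Finset.prod_congr rfl fun k _ => by rw [Nat.add_comm k 1, Nat.zero_add]
    rw [hP]
    have hc : prefixCount y d ≤ d := pc_le y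
    have e : (d+1) - prefixCount y d = (d - prefixCount y d) + 1 := by omega
    rw [e, pow_succ, binom]
    norm_num
    ring
  · -- true part = Bfun d 1 1
    apply Finset.sum_congr rfl
    intro y _
    simp only [pc_cons, if_true]
    have hP : (∏ k ∈ Finset.range (d+1), (1 - ψ (k+1) (1 + prefixCount y k)))
        = ∏ k ∈ Finset.range (d+1), (1 - ψ (1+k) (1 + prefixCount y k)) :=
      Finset.prod_congr rfl fun k _ => by rw [Nat.add_comm k 1]
    rw [hP]
    have hc : prefixCount y d ≤ d := pc_le y
    have e : (d+1) - (1 + prefixCount y d) = d - prefixCount y d := by omega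
    rw [e, binom]
    norm_num
    ring

lemma marg (θ : ℝ) (ψ : ℕ → ℕ → ℝ) (m : ℕ) :
    ∑ x : Fin (m+1) → Bool,
      (∏ k ∈ Finset.range m, (1 - ψ (k + 1) (prefixCount x (k + 1)))) *
        (θ ^ prefixCount x (m+1) * (1 - θ) ^ ((m+1) - prefixCount x (m+1)))
    = Qfun θ ψ m := by
  rw [Qfun]
  rw [(Fintype.sum_equiv (Fin.snocEquiv fun _ : Fin (m+1) => Bool)
    (fun p : Bool × (Fin m → Bool) =>
      (∏ k ∈ Finset.range m,
        (1 - ψ (k + 1) (prefixCount (Fin.snoc p.2 p.1 : Fin (m+1) → Bool) (k + 1)))) *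
      (θ ^ prefixCount (Fin.snoc p.2 p.1 : Fin (m+1) → Bool) (m+1) *
        (1 - θ) ^ ((m+1) - prefixCount (Fin.snoc p.2 p.1 : Fin (m+1) → Bool) (m+1)))) _
    (fun _ => rfl)).symm]
  rw [Fintype.sum_prod_type, Fintype.sum_bool, ← Finset.sum_add_distrib]
  apply Finset.sum_congr rfl
  intro x _
  have hP : ∀ b : Bool, (∏ k ∈ Finset.range m,
      (1 - ψ (k+1) (prefixCount (Fin.snoc x b : Fin (m+1) → Bool) (k+1))))
      = ∏ k ∈ Finset.range m, (1 - ψ (k+1) (prefixCount x (k+1))) := fun b =>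
    Finset.prod_congr rfl fun k hk => by
      rw [pc_snoc_lt x b (k+1) (by simpa using Finset.mem_range.mp hk)]
  rw [hP true, hP false, pc_snoc_top, pc_snoc_top]
  simp only [if_true, Bool.false_eq_true, if_false, add_zero]
  have hc : prefixCount x m ≤ m := pc_le x
  have e1 : (m+1) - (prefixCount x m + 1) = m - prefixCount x m := by omega
  have e2 : (m+1) - prefixCount x m = (m - prefixCount x m) + 1 := by omega
  rw [e1, e2, pow_succ, pow_succ]
  ring

lemma Tsum (θ : ℝ) (ψ : ℕ → ℕ → ℝ) (m : ℕ) :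
    (∑ x : Fin (m+1) → Bool,
      sstop ψ (m+1) x * (θ ^ prefixCount x (m+1) * (1 - θ) ^ ((m+1) - prefixCount x (m+1))))
    = Qfun θ ψ m - Qfun θ ψ (m+1) := by
  rw [← marg θ ψ m, Qfun, ← Finset.sum_sub_distrib]
  apply Finset.sum_congr rfl
  intro x _
  rw [sstop, show (m+1) - 1 = m from rfl, Finset.prod_range_succ]
  ring

lemma abel (Q : ℕ → ℝ) (N : ℕ) :
    ∑ n ∈ Finset.Icc 1 N, (n:ℝ) * (Q (n-1) - Q n)
      = (∑ m ∈ Finset.range N, Q m) - N * Q N := by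
  induction N with
  | zero => simp
  | succ N ih =>
    rw [Finset.sum_Icc_succ_top (by omega : 1 ≤ N+1), ih, Finset.sum_range_succ,
      show (N+1) - 1 = N from rfl]
    push_cast
    ring

lemma Q_trunc (θ : ℝ) (ψ : ℕ → ℕ → ℝ) (N : ℕ) (h : TruncatedAt ψ N) :
    Qfun θ ψ N = 0 := by
  rw [Qfun]
  apply Finset.sum_eq_zero
  intro x _
  rw [h x, zero_mul]

/-- **Equation (4-2)**: for a stopping rule `ψ ∈ 𝒮^N` based on the sufficient
statistic, the expected sample size satisfies
`E_θ τ_ψ = Σ_{n=1}^N n Σ_{x∈{0,1}^n} s_n^ψ(x) θ^{s_n(x)}(1−θ)^{n−s_n(x)}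
  = 1 + Σ_{m=1}^{N−1} (b_1^m(0;θ) + b_1^m(1;θ))`. -/
theorem stmt4 (θ : ℝ) (hθ : θ ∈ Set.Icc (0 : ℝ) 1)
    (N : ℕ) (hN : 1 ≤ N)
    (ψ : ℕ → ℕ → ℝ) (hψ : ∀ n s, ψ n s ∈ Set.Icc (0 : ℝ) 1)
    (htrunc : TruncatedAt ψ N) :
    ∑ n ∈ Finset.Icc 1 N, (n : ℝ) *
        ∑ x : Fin n → Bool,
          sstop ψ n x * (θ ^ prefixCount x n * (1 - θ) ^ (n - prefixCount x n)) =
      1 + ∑ m ∈ Finset.Icc 1 (N - 1), (brec θ ψ m 1 0 + brec θ ψ m 1 1) := by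

  obtain ⟨K, rfl⟩ : ∃ K, N = K + 1 := ⟨N - 1, by omega⟩
  have hsum : ∀ n ∈ Finset.Icc 1 (K+1),
      (n : ℝ) * (∑ x : Fin n → Bool,
        sstop ψ n x * (θ ^ prefixCount x n * (1 - θ) ^ (n - prefixCount x n)))
      = (n:ℝ) * (Qfun θ ψ (n-1) - Qfun θ ψ n) := by
    intro n hn
    obtain ⟨m, rfl⟩ : ∃ m, n = m + 1 := ⟨n - 1, by
      have := (Finset.mem_Icc.mp hn).1; omega⟩
    rw [Tsum, show (m+1) - 1 = m from rfl]
  rw [Finset.sum_congr rfl hsum, abel, Q_trunc θ ψ (K+1) htrunc,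
    Finset.sum_range_succ']
  simp only [Qfun_zero, Nat.cast_add, Nat.cast_one, mul_zero, sub_zero,
    Nat.add_sub_cancel]
  rw [add_comm]
  congr 1
  rw [← Finset.Ico_add_one_right_eq_Icc, Finset.sum_Ico_eq_sum_range,
    show K + 1 - 1 = K from rfl]
  apply Finset.sum_congr rfl
  intro i _
  have h1 : Qfun θ ψ (i+1) = Bfun θ ψ i 1 0 + Bfun θ ψ i 1 1 := Q_eq_B θ ψ i
  have h2 : brec θ ψ (1+i) 1 0 = Bfun θ ψ i 1 0 := brec_eq θ ψ i 1 0
  have h3 : brec θ ψ (1+i) 1 1 = Bfun θ ψ i 1 1 := brec_eq θ ψ i 1 1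
  rw [show i + 1 = 1 + i from by omega, show Qfun θ ψ (1+i) = Qfun θ ψ (i+1) from by rw [Nat.add_comm], h1, ← h2, ← h3]
end
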